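/- Let q be a nondegenerate quadratic form on an F-vector space V and let Γ⁺(V, q) = {g ∈ C₀(V, q)ˣ | g·V·g⁻¹ = V} be the even Clifford group. Then the spinor norm Sn : Γ⁺(V, q) → Fˣ, defined by Sn(g) = g·τ(g) where τ is the canonical involution on the even Clifford algebra, is a group homomorphism. -/

import Mathlib

set_option maxHeartbeats 1000000

open CliffordAlgebra

namespace SpinorAux



variable {F : Type*} [Field F]
variable {V : Type*} [AddCommGroup V] [Module F V]

/-- The twisted commutator with a vector equals contraction with the polar form. -/
theorem commutator_eq_contract (q : QuadraticForm F V) (v : V) (y : CliffordAlgebra q) :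
    ι q v * y - involute y * ι q v = contractLeft (QuadraticMap.polarBilin q v) y := by
  induction y using CliffordAlgebra.left_induction with
  | algebraMap r =>
      simp [Algebra.commutes]
  | add x y hx hy =>
      rw [map_add, map_add, mul_add, add_mul, ← hx, ← hy]
      abel
  | ι_mul x m hx =>
      rw [contractLeft_ι_mul, ← hx]
      have key : ((QuadraticMap.polarBilin q) v) m • x
          = ι q v * ι q m * x + ι q m * (ι q v * x) := by
        rw [QuadraticMap.polarBilin_apply_apply, Algebra.smul_def, ← ι_mul_ι_add_swap,
          add_mul, mul_assoc, mul_assoc]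
      rw [key, map_mul, involute_ι]
      noncomm_ring

/-- Contraction commutes with `CliffordAlgebra.map` along an isometry. -/
theorem contract_map {W : Type*} [AddCommGroup W] [Module F W]
    {q₁ : QuadraticForm F W} {q₂ : QuadraticForm F V}
    (f : q₁ →qᵢ q₂) (d : Module.Dual F V) (y : CliffordAlgebra q₁) :
    contractLeft d (CliffordAlgebra.map f y)
      = CliffordAlgebra.map f (contractLeft (d.comp f.toLinearMap) y) := by
  induction y using CliffordAlgebra.left_induction with
  | algebraMap r => simp
  | add x y hx hy => simp only [map_add, hx, hy]
  | ι_mul x m hx =>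
      rw [map_mul, map_apply_ι, contractLeft_ι_mul, contractLeft_ι_mul, map_sub, map_smul, hx,
        map_mul, map_apply_ι]
      rfl




/-- In the exterior algebra over a finite-dimensional space, an element killed by all
contractions is a scalar. -/
theorem exterior_scalar_aux (n : ℕ) :
    ∀ (V : Type*) [AddCommGroup V] [Module F V] [FiniteDimensional F V],
    Module.finrank F V = n →
    ∀ x : CliffordAlgebra (0 : QuadraticForm F V),
      (∀ d : Module.Dual F V, contractLeft d x = 0) →
      ∃ r : F, x = algebraMap F _ r := by
  induction n with
  | zero =>
      intro V _ _ _ hV x hx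
      have : Subsingleton V := by
        rw [Module.finrank_zero_iff (R := F)] at hV; exact hV
      clear hx
      induction x using CliffordAlgebra.induction with
      | algebraMap r => exact ⟨r, rfl⟩
      | ι v => exact ⟨0, by rw [Subsingleton.elim v 0, map_zero, map_zero]⟩
      | mul a b ha hb =>
          obtain ⟨r, rfl⟩ := ha; obtain ⟨s, rfl⟩ := hb
          exact ⟨r * s, (map_mul _ _ _).symm⟩
      | add a b ha hb =>
          obtain ⟨r, rfl⟩ := ha; obtain ⟨s, rfl⟩ := hb
          exact ⟨r + s, (map_add _ _ _).symm⟩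
  | succ n ih =>
      intro V _ _ _ hV x hx
      -- pick a nonzero vector e
      have : Nontrivial V := by
        have : 0 < Module.finrank F V := by omega
        exact Module.nontrivial_of_finrank_pos this
      obtain ⟨e, he⟩ := exists_ne (0 : V)
      set E : Submodule F V := Submodule.span F {e} with hE
      obtain ⟨W, hEW⟩ := Submodule.exists_isCompl E
      have hrankW : Module.finrank F W = n := by
        have h1 := Submodule.finrank_add_eq_of_isCompl hEW
        have h2 : Module.finrank F E = 1 := finrank_span_singleton he
        omega
      -- the dual functional f with f e = 1, f W = 0
      let prE : V →ₗ[F] E := E.linearProjOfIsCompl W hEW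
      let prW : V →ₗ[F] W := W.linearProjOfIsCompl E hEW.symm
      let coE : E ≃ₗ[F] F := (LinearEquiv.toSpanNonzeroSingleton F V e he).symm
      let f : Module.Dual F V := coE.toLinearMap ∘ₗ prE
      have hcoEe : coE ⟨e, Submodule.mem_span_singleton_self e⟩ = 1 := by
        have h2 : (LinearEquiv.toSpanNonzeroSingleton F V e he) 1
            = ⟨e, Submodule.mem_span_singleton_self e⟩ := Subtype.ext (one_smul F e)
        rw [← h2]
        exact (LinearEquiv.toSpanNonzeroSingleton F V e he).symm_apply_apply 1
      have hfe : f e = 1 := by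
        have h1 : prE e = ⟨e, Submodule.mem_span_singleton_self e⟩ :=
          Submodule.linearProjOfIsCompl_apply_left hEW ⟨e, Submodule.mem_span_singleton_self e⟩
        simp only [f, LinearMap.comp_apply, h1, LinearEquiv.coe_coe]
        exact hcoEe
      have hfW : ∀ w : W, f (w : V) = 0 := by
        intro w
        have h1 : prE (w : V) = 0 := Submodule.linearProjOfIsCompl_apply_right hEW w
        simp only [f, LinearMap.comp_apply, h1, map_zero]
      -- the algebra embedding of the exterior algebra of W
      let ιW : (0 : QuadraticForm F W) →qᵢ (0 : QuadraticForm F V) :=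
        { toLinearMap := W.subtype, map_app' := fun _ => rfl }
      let πW : (0 : QuadraticForm F V) →qᵢ (0 : QuadraticForm F W) :=
        { toLinearMap := prW, map_app' := fun _ => rfl }
      let j := CliffordAlgebra.map ιW
      have hretr : ∀ y, CliffordAlgebra.map πW (j y) = y := by
        intro y
        have : (CliffordAlgebra.map πW).comp (CliffordAlgebra.map ιW)
            = AlgHom.id F (CliffordAlgebra (0 : QuadraticForm F W)) := by
          rw [CliffordAlgebra.map_comp_map]
          have : πW.comp ιW = QuadraticMap.Isometry.id (0 : QuadraticForm F W) := by
            ext w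
            exact congrArg Subtype.val
              (Submodule.linearProjOfIsCompl_apply_left hEW.symm w)
          rw [this, CliffordAlgebra.map_id]
        exact DFunLike.congr_fun this y
      have hj_inj : Function.Injective j := Function.LeftInverse.injective hretr
      -- multiplication facts
      have hsq : ι (0 : QuadraticForm F V) e * ι (0 : QuadraticForm F V) e = 0 := by
        rw [ι_sq_scalar]; simp
      have hanti : ∀ w : V, ι (0 : QuadraticForm F V) w * ι (0 : QuadraticForm F V) e
          = -(ι (0 : QuadraticForm F V) e * ι (0 : QuadraticForm F V) w) := fun w =>
        ι_mul_ι_comm_of_isOrtho (by simp [QuadraticMap.IsOrtho])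
      -- every element decomposes as `j a + ι e * j b`
      have hdecomp : ∀ z : CliffordAlgebra (0 : QuadraticForm F V),
          ∃ a b, z = j a + ι (0 : QuadraticForm F V) e * j b := by
        intro z
        induction z using CliffordAlgebra.left_induction with
        | algebraMap r =>
            exact ⟨algebraMap F _ r, 0, by rw [AlgHom.commutes, map_zero, mul_zero, add_zero]⟩
        | add z₁ z₂ h₁ h₂ =>
            obtain ⟨a₁, b₁, rfl⟩ := h₁; obtain ⟨a₂, b₂, rfl⟩ := h₂
            refine ⟨a₁ + a₂, b₁ + b₂, ?_⟩
            rw [map_add, map_add, mul_add]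
            abel
        | ι_mul z v h =>
            obtain ⟨a, b, rfl⟩ := h
            set w : W := prW v with hw
            obtain ⟨c, hc⟩ := Submodule.mem_span_singleton.mp (prE v).2
            have hprEv : prE v = c • ⟨e, Submodule.mem_span_singleton_self e⟩ :=
              Subtype.ext hc.symm
            have hv : v = (w : V) + c • e := by
              have h3 : (prE v : V) + (prW v : V) = v := Submodule.projection_add_projection_eq_self hEW v
              rw [hc]
              conv_lhs => rw [← h3]
              exact add_comm _ _
            refine ⟨ι (0 : QuadraticForm F W) w * a,
              c • a - ι (0 : QuadraticForm F W) w * b, ?_⟩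
            have h1 : j (ι (0 : QuadraticForm F W) w * a)
                = ι (0 : QuadraticForm F V) (w : V) * j a := by
              rw [map_mul, map_apply_ι]; rfl
            have h2 : j (ι (0 : QuadraticForm F W) w * b)
                = ι (0 : QuadraticForm F V) (w : V) * j b := by
              rw [map_mul, map_apply_ι]; rfl
            have hvι : ι (0 : QuadraticForm F V) v
                = ι (0 : QuadraticForm F V) (w : V) + c • ι (0 : QuadraticForm F V) e := by
              rw [hv, map_add, map_smul]
            have e1 : ι (0 : QuadraticForm F V) (w : V) * (ι (0 : QuadraticForm F V) e * j b)
                = -(ι (0 : QuadraticForm F V) e * (ι (0 : QuadraticForm F V) (w : V) * j b)) := by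
              rw [← mul_assoc, hanti, neg_mul, mul_assoc]
            have e2 : ι (0 : QuadraticForm F V) e * (ι (0 : QuadraticForm F V) e * j b) = 0 := by
              rw [← mul_assoc, hsq, zero_mul]
            have expand : (ι (0 : QuadraticForm F V) (w : V) + c • ι (0 : QuadraticForm F V) e)
                  * (j a + ι (0 : QuadraticForm F V) e * j b)
                = ι (0 : QuadraticForm F V) (w : V) * j a
                  + (ι (0 : QuadraticForm F V) (w : V) * ι (0 : QuadraticForm F V) e) * j b
                  + c • ((ι (0 : QuadraticForm F V) e) * j a)
                  + c • ((ι (0 : QuadraticForm F V) e * ι (0 : QuadraticForm F V) e) * j b) := by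
              rw [add_mul, mul_add, mul_add, smul_mul_assoc, smul_mul_assoc,
                ← mul_assoc, ← mul_assoc]
              abel
            rw [h1, map_sub, map_smul, h2, hvι, expand, hanti, hsq, zero_mul, smul_zero,
              add_zero, neg_mul, mul_assoc, mul_sub, mul_smul_comm]
            abel
      -- apply the decomposition to `x`
      obtain ⟨a, b, hab⟩ := hdecomp x
      have hconj : ∀ (d : Module.Dual F V) (y : CliffordAlgebra (0 : QuadraticForm F W)),
          contractLeft d (j y)
            = j (contractLeft (d.comp ιW.toLinearMap) y) := fun d y => contract_map ιW d y
      have hfa : contractLeft f (j a) = 0 := by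
        rw [hconj]
        have : f.comp ιW.toLinearMap = 0 := LinearMap.ext fun w => hfW w
        rw [this, map_zero, LinearMap.zero_apply, map_zero]
      have hjb : j b = 0 := by
        have h0 := hx f
        rw [hab, map_add, hfa, zero_add, contractLeft_ι_mul, hconj] at h0
        have : f.comp ιW.toLinearMap = 0 := LinearMap.ext fun w => hfW w
        rw [this, map_zero, LinearMap.zero_apply, map_zero, mul_zero, sub_zero, hfe,
          one_smul] at h0
        exact h0
      have hxa : x = j a := by rw [hab, hjb, mul_zero, add_zero]
      have ha : ∀ d' : Module.Dual F W, contractLeft d' a = 0 := by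
        intro d'
        apply hj_inj
        have hd : (d'.comp prW).comp ιW.toLinearMap = d' := by
          ext w
          simp only [LinearMap.comp_apply]
          exact congrArg d' (Submodule.linearProjOfIsCompl_apply_left hEW.symm w)
        rw [← hd, ← hconj, ← hxa, hx, map_zero]
      obtain ⟨r, rfl⟩ := ih W hrankW a ha
      exact ⟨r, by rw [hxa, AlgHom.commutes]⟩


theorem contract_zero_scalar [FiniteDimensional F V] (q : QuadraticForm F V)
    (x : CliffordAlgebra q)
    (hx : ∀ d : Module.Dual F V, contractLeft d x = 0) :
    ∃ r : F, x = algebraMap F _ r := by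
  obtain ⟨B₀, hB₀⟩ := LinearMap.BilinMap.toQuadraticMap_surjective (R := F) (M := V) q
  have h : (-B₀).toQuadraticMap = (0 : QuadraticForm F V) - q := by
    ext m
    simp only [LinearMap.BilinMap.toQuadraticMap_apply, LinearMap.neg_apply,
      QuadraticMap.sub_apply, QuadraticMap.zero_apply, zero_sub, QuadraticMap.neg_apply, ← hB₀]
  have hy : ∀ d : Module.Dual F V, contractLeft d (changeForm h x) = 0 := fun d => by
    rw [← changeForm_contractLeft, hx d, map_zero]
  obtain ⟨r, hr⟩ := exterior_scalar_aux (Module.finrank F V) V rfl (changeForm h x) hy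
  refine ⟨r, (changeFormEquiv h).injective ?_⟩
  rw [changeFormEquiv_apply, changeFormEquiv_apply, changeForm_algebraMap, hr]

theorem nontrivial_clifford (q : QuadraticForm F V) : Nontrivial (CliffordAlgebra q) := by
  obtain ⟨B₀, hB₀⟩ := LinearMap.BilinMap.toQuadraticMap_surjective (R := F) (M := V) q
  have h : (-B₀).toQuadraticMap = (0 : QuadraticForm F V) - q := by
    ext m
    simp only [LinearMap.BilinMap.toQuadraticMap_apply, LinearMap.neg_apply,
      QuadraticMap.sub_apply, QuadraticMap.zero_apply, zero_sub, QuadraticMap.neg_apply, ← hB₀]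
  exact Equiv.nontrivial (changeFormEquiv h).toEquiv


end SpinorAux

open CliffordAlgebra in
/-- Let `q` be a nondegenerate quadratic form on an `F`-vector space `V` and
`Γ⁺(V, q) = {g ∈ C₀(V, q)ˣ | g·V·g⁻¹ = V}` the even Clifford group.  Then the spinor norm
`Sn(g) = g·τ(g)`, where `τ` is the canonical involution (reversal) on the even Clifford
algebra, takes values in `Fˣ` and is a group homomorphism: `Sn(gh) = Sn(g)·Sn(h)`. -/
theorem spinor_norm_hom (F V : Type*) [Field F] [AddCommGroup V] [Module F V]
    [FiniteDimensional F V]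
    (q : QuadraticForm F V)
    (hq : (QuadraticMap.polarBilin q).Nondegenerate) :
    (∀ g : (CliffordAlgebra q)ˣ,
        (g : CliffordAlgebra q) ∈ even q →
        (∀ v : V, (g : CliffordAlgebra q) * ι q v * ((g⁻¹ : (CliffordAlgebra q)ˣ) : CliffordAlgebra q) ∈ LinearMap.range (ι q)) →
        (∀ v : V, ∃ w : V, ι q v = (g : CliffordAlgebra q) * ι q w * ((g⁻¹ : (CliffordAlgebra q)ˣ) : CliffordAlgebra q)) →
        ∃ α : Fˣ, (g : CliffordAlgebra q) * reverse (g : CliffordAlgebra q)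
          = algebraMap F (CliffordAlgebra q) (α : F)) ∧
    (∀ g h : (CliffordAlgebra q)ˣ,
        (g : CliffordAlgebra q) ∈ even q →
        (∀ v : V, (g : CliffordAlgebra q) * ι q v * ((g⁻¹ : (CliffordAlgebra q)ˣ) : CliffordAlgebra q) ∈ LinearMap.range (ι q)) →
        (∀ v : V, ∃ w : V, ι q v = (g : CliffordAlgebra q) * ι q w * ((g⁻¹ : (CliffordAlgebra q)ˣ) : CliffordAlgebra q)) →
        (h : CliffordAlgebra q) ∈ even q →
        (∀ v : V, (h : CliffordAlgebra q) * ι q v * ((h⁻¹ : (CliffordAlgebra q)ˣ) : CliffordAlgebra q) ∈ LinearMap.range (ι q)) →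
        (∀ v : V, ∃ w : V, ι q v = (h : CliffordAlgebra q) * ι q w * ((h⁻¹ : (CliffordAlgebra q)ˣ) : CliffordAlgebra q)) →
        ∀ α β : F,
          (g : CliffordAlgebra q) * reverse (g : CliffordAlgebra q)
            = algebraMap F (CliffordAlgebra q) α →
          (h : CliffordAlgebra q) * reverse (h : CliffordAlgebra q)
            = algebraMap F (CliffordAlgebra q) β →
          ((g * h : (CliffordAlgebra q)ˣ) : CliffordAlgebra q) *
              reverse ((g * h : (CliffordAlgebra q)ˣ) : CliffordAlgebra q)
            = algebraMap F (CliffordAlgebra q) (α * β)) := by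
  constructor
  · intro g hg_even hg1 hg2
    clear hg1
    set x : CliffordAlgebra q := ↑g * reverse (↑g : CliffordAlgebra q) with hxdef
    have hrr : reverse (↑g : CliffordAlgebra q) * reverse (↑(g⁻¹) : CliffordAlgebra q) = 1 := by
      rw [← reverse.map_mul, Units.inv_mul, reverse.map_one]
    have hrr' : reverse (↑(g⁻¹) : CliffordAlgebra q) * reverse (↑g : CliffordAlgebra q) = 1 := by
      rw [← reverse.map_mul, Units.mul_inv, reverse.map_one]
    -- x commutes with every vector
    have hcomm : ∀ v : V, ι q v * x = x * ι q v := by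
      intro v
      obtain ⟨w, hw⟩ := hg2 v
      have hrev : (ι q v : CliffordAlgebra q)
          = reverse (↑(g⁻¹) : CliffordAlgebra q) * (ι q w * reverse (↑g : CliffordAlgebra q)) := by
        have := congrArg (reverse (Q := q)) hw
        rw [reverse_ι, reverse.map_mul, reverse.map_mul, reverse_ι] at this
        rw [this]
      have lhs_eq : ι q v * x = ↑g * (ι q w * reverse (↑g : CliffordAlgebra q)) := by
        rw [hxdef, hw, mul_assoc, mul_assoc, ← mul_assoc (↑(g⁻¹) : CliffordAlgebra q),
          Units.inv_mul, one_mul, ← mul_assoc, mul_assoc]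
      have rhs_eq : x * ι q v = ↑g * (ι q w * reverse (↑g : CliffordAlgebra q)) := by
        rw [hxdef, hrev, mul_assoc, ← mul_assoc (reverse (↑g : CliffordAlgebra q)), hrr, one_mul]
      rw [lhs_eq, rhs_eq]
    -- x is even
    have hx_even : x ∈ evenOdd q 0 := by
      have h1 : (↑g : CliffordAlgebra q) ∈ evenOdd q 0 := by
        rw [← even_toSubmodule]; exact hg_even
      have h2 : reverse (↑g : CliffordAlgebra q) ∈ evenOdd q 0 :=
        (reverse_mem_evenOdd_iff q).mpr h1
      have := SetLike.mul_mem_graded h1 h2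
      norm_num at this
      exact this
    have hinv : involute x = x := involute_eq_of_mem_even hx_even
    -- all contractions of x vanish
    have hcontr : ∀ d : Module.Dual F V, contractLeft d x = 0 := by
      intro d
      have hv : QuadraticMap.polarBilin q ((LinearMap.BilinForm.toDual (QuadraticMap.polarBilin q) hq).symm d) = d := by
        ext u
        conv_rhs => rw [← (LinearMap.BilinForm.toDual (QuadraticMap.polarBilin q) hq).apply_symm_apply d]
        exact (LinearMap.BilinForm.toDual_def hq).symm
      rw [← hv, ← SpinorAux.commutator_eq_contract, hinv, hcomm, sub_self]
    obtain ⟨r, hr⟩ := SpinorAux.contract_zero_scalar q x hcontr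
    have : Nontrivial (CliffordAlgebra q) := SpinorAux.nontrivial_clifford q
    have hunit : IsUnit x := by
      refine ⟨g * ⟨reverse ↑g, reverse ↑(g⁻¹), hrr, hrr'⟩, rfl⟩
    have hr0 : r ≠ 0 := by
      rintro rfl
      rw [map_zero] at hr
      exact hunit.ne_zero hr
    exact ⟨Units.mk0 r hr0, hr⟩
  · intro g h _ _ _ _ _ _ α β hα hβ
    rw [Units.val_mul, reverse.map_mul]
    calc (↑g : CliffordAlgebra q) * ↑h * (reverse (↑h : CliffordAlgebra q) * reverse (↑g : CliffordAlgebra q))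
        = ↑g * ((↑h : CliffordAlgebra q) * reverse (↑h : CliffordAlgebra q)) * reverse (↑g : CliffordAlgebra q) := by
          noncomm_ring
      _ = ↑g * algebraMap F (CliffordAlgebra q) β * reverse (↑g : CliffordAlgebra q) := by rw [hβ]
      _ = algebraMap F (CliffordAlgebra q) β * ((↑g : CliffordAlgebra q) * reverse (↑g : CliffordAlgebra q)) := by
          rw [← Algebra.commutes β (↑g : CliffordAlgebra q), mul_assoc]
      _ = algebraMap F (CliffordAlgebra q) β * algebraMap F (CliffordAlgebra q) α := by rw [hα]
      _ = algebraMap F (CliffordAlgebra q) (α * β) := by rw [← map_mul, mul_comm]
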